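/- Let Λ be a map from positive operators M with 0 ≤ M ≤ 1 on a finite-dimensional Hilbert space to [0,∞) such that Σ_i Λ(M_i) = 1 for every finite family of positive operators with Σ_i M_i = 1. Then Λ is additive: if M_1, M_2, M_1 + M_2 are all between 0 and 1, then Λ(M_1 + M_2) = Λ(M_1) + Λ(M_2), and Λ extends uniquely to a linear functional on all Hermitian operators. -/

import Mathlib

open ComplexOrder

section GleasonAux
open Matrix

namespace Gaux
open scoped Classical
abbrev Mat (d : ℕ) := Matrix (Fin d) (Fin d) ℂ

variable {d : ℕ}

def Eff (M : Mat d) : Prop := M.PosSemidef ∧ ((1 : Mat d) - M).PosSemidef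

lemma psd_smul {r : ℝ} (hr : 0 ≤ r) {A : Mat d} (hA : A.PosSemidef) : (r • A).PosSemidef := by
  refine Matrix.posSemidef_iff_dotProduct_mulVec.mpr ⟨?_, fun x => ?_⟩
  · unfold Matrix.IsHermitian
    rw [Matrix.conjTranspose_smul, hA.1.eq, star_trivial]
  · have h1 : (r • A) *ᵥ x = r • (A *ᵥ x) := by simp [Matrix.smul_mulVec]
    rw [h1]
    have h2 : dotProduct (star x) (r • (A *ᵥ x))
        = (r:ℂ) * dotProduct (star x) (A *ᵥ x) := by
      simp [dotProduct_smul, Complex.real_smul]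
    rw [h2]
    exact mul_nonneg (by exact_mod_cast hr) ((Matrix.posSemidef_iff_dotProduct_mulVec.mp hA).2 x)

lemma eff_smul {t : ℝ} (ht0 : 0 ≤ t) (ht1 : t ≤ 1) {M : Mat d} (hM : Eff M) : Eff (t • M) := by
  refine ⟨psd_smul ht0 hM.1, ?_⟩
  have key : (1 : Mat d) - t • M = ((1 : Mat d) - M) + (1 - t) • M := by
    rw [sub_smul, one_smul]; abel
  rw [key]
  exact hM.2.add (psd_smul (by linarith) hM.1)


lemma exists_bound {A : Mat d} (hA : A.IsHermitian) :
    ∃ c : ℝ, 0 < c ∧ (c • (1 : Mat d) - A).PosSemidef := by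
  classical
  set c : ℝ := 1 + ∑ i, |hA.eigenvalues i| with hc
  have hcpos : 0 < c := by positivity
  refine ⟨c, hcpos, ?_⟩
  have hev : ∀ i, hA.eigenvalues i ≤ c := by
    intro i
    have h1 : |hA.eigenvalues i| ≤ ∑ j, |hA.eigenvalues j| :=
      Finset.single_le_sum (f := fun j => |hA.eigenvalues j|) (fun j _ => abs_nonneg _)
        (Finset.mem_univ i)
    have := le_abs_self (hA.eigenvalues i)
    simp only [hc]; linarith
  set U : Mat d := (hA.eigenvectorUnitary : Mat d) with hUdef
  have hU : U * star U = 1 := Matrix.mem_unitaryGroup_iff.mp hA.eigenvectorUnitary.2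
  have hdiag : Matrix.diagonal (fun i => ((c - hA.eigenvalues i : ℝ) : ℂ))
      = c • (1 : Mat d) - Matrix.diagonal (Complex.ofReal ∘ hA.eigenvalues) := by
    ext i j
    by_cases h : i = j <;> simp [Matrix.diagonal, h, Matrix.one_apply, Complex.real_smul]
  have key : c • (1 : Mat d) - A
      = U * Matrix.diagonal (fun i => ((c - hA.eigenvalues i : ℝ) : ℂ)) * star U := by
    rw [hdiag, mul_sub, sub_mul, Matrix.mul_smul, Matrix.smul_mul, mul_one, hU]
    congr 1
    exact hA.spectral_theorem
  rw [key, Matrix.star_eq_conjTranspose]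
  refine (Matrix.PosSemidef.diagonal ?_).mul_mul_conjTranspose_same U
  intro i
  rw [Pi.zero_apply, Complex.zero_le_real]
  linarith [hev i]

variable (Λ : Matrix (Fin d) (Fin d) ℂ → ℝ)
  (hpos : ∀ M : Matrix (Fin d) (Fin d) ℂ,
      M.PosSemidef → (1 - M).PosSemidef → 0 ≤ Λ M)
  (hsum : ∀ (k : ℕ) (M : Fin k → Matrix (Fin d) (Fin d) ℂ),
      (∀ i, (M i).PosSemidef) → ∑ i, M i = 1 → ∑ i, Λ (M i) = 1)

include hsum in
lemma lam_add (M₁ M₂ : Mat d) (h1 : M₁.PosSemidef) (h2 : M₂.PosSemidef)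
    (h12 : ((1 : Mat d) - (M₁ + M₂)).PosSemidef) : Λ (M₁ + M₂) = Λ M₁ + Λ M₂ := by
  have e3 := hsum 3 ![M₁, M₂, 1 - (M₁ + M₂)] (by
      intro i; fin_cases i <;> simpa using ‹_›) (by
      simp [Fin.sum_univ_three])
  have e2 := hsum 2 ![M₁ + M₂, 1 - (M₁ + M₂)] (by
      intro i; fin_cases i
      · simpa using h1.add h2
      · simpa using h12) (by
      simp [Fin.sum_univ_two])
  rw [Fin.sum_univ_three] at e3
  rw [Fin.sum_univ_two] at e2
  simp only [Matrix.cons_val_zero, Matrix.cons_val_one, Matrix.head_cons,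
    Matrix.head_fin_const, Matrix.cons_val_two, Matrix.tail_cons] at e3 e2
  linarith

include hsum in
lemma lam_zero : Λ (0 : Mat d) = 0 := by
  have := lam_add Λ hsum 0 0 Matrix.PosSemidef.zero Matrix.PosSemidef.zero
    (by simpa using Matrix.PosSemidef.one)
  simpa using this


lemma psd_sum {k : ℕ} (N : Fin k → Mat d) (h : ∀ i, (N i).PosSemidef) :
    (∑ i, N i).PosSemidef :=
  Finset.sum_induction N Matrix.PosSemidef (fun _ _ ha hb => ha.add hb)
    Matrix.PosSemidef.zero (fun i _ => h i)

include hsum in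
lemma lam_sum (k : ℕ) : ∀ (N : Fin k → Mat d), (∀ i, (N i).PosSemidef) →
    ((1 : Mat d) - ∑ i, N i).PosSemidef → Λ (∑ i, N i) = ∑ i, Λ (N i) := by
  induction k with
  | zero => intro N h h1; simpa using lam_zero Λ hsum
  | succ n ih =>
    intro N h h1
    rw [Fin.sum_univ_succ, Fin.sum_univ_succ]
    have hT : (∑ i : Fin n, N i.succ).PosSemidef := psd_sum _ (fun i => h i.succ)
    have hfull : ((1 : Mat d) - (N 0 + ∑ i : Fin n, N i.succ)).PosSemidef := by
      have : (1 : Mat d) - (N 0 + ∑ i : Fin n, N i.succ) = 1 - ∑ i, N i := by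
        rw [Fin.sum_univ_succ]
      rw [this]; exact h1
    rw [lam_add Λ hsum _ _ (h 0) hT hfull]
    congr 1
    refine ih _ (fun i => h i.succ) ?_
    have : (1 : Mat d) - ∑ i : Fin n, N i.succ
        = ((1 : Mat d) - (N 0 + ∑ i : Fin n, N i.succ)) + N 0 := by abel
    rw [this]
    exact hfull.add (h 0)

include hsum in
lemma lam_nsmul (n : ℕ) (M : Mat d) (hM : Eff M)
    (h : ((1 : Mat d) - (n : ℝ) • M).PosSemidef) : Λ ((n : ℝ) • M) = n * Λ M := by
  have hsumM : (∑ _i : Fin n, M) = (n : ℝ) • M := by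
    rw [Finset.sum_const, Finset.card_univ, Fintype.card_fin, ← Nat.cast_smul_eq_nsmul ℝ]
  have := lam_sum Λ hsum n (fun _ => M) (fun _ => hM.1) (by rw [hsumM]; exact h)
  rw [hsumM] at this
  rw [this, Finset.sum_const, Finset.card_univ, Fintype.card_fin, nsmul_eq_mul]

include hsum in
lemma lam_ratnat (p q : ℕ) (hq : 0 < q) (hpq : p ≤ q) (M : Mat d) (hM : Eff M) :
    Λ (((p : ℝ) / q) • M) = (p : ℝ) / q * Λ M := by
  have hq0 : (0:ℝ) < q := by exact_mod_cast hq
  set N : Mat d := ((q : ℝ)⁻¹) • M with hN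
  have hNeff : Eff N := eff_smul (by positivity) (by
    rw [inv_le_one_iff₀]; right; exact_mod_cast hq) hM
  have hqN : (q : ℝ) • N = M := by
    rw [hN, smul_smul, mul_inv_cancel₀ hq0.ne', one_smul]
  have h1 : Λ M = q * Λ N := by
    have := lam_nsmul Λ hsum q N hNeff (by rw [hqN]; exact hM.2)
    rw [hqN] at this; exact this
  have hpN : (p : ℝ) • N = ((p : ℝ) / q) • M := by
    rw [hN, smul_smul, div_eq_mul_inv]
  have heffp : Eff (((p : ℝ) / q) • M) := eff_smul (by positivity)
    (by rw [div_le_one hq0]; exact_mod_cast hpq) hM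
  have h2 := lam_nsmul Λ hsum p N hNeff (by rw [hpN]; exact heffp.2)
  rw [hpN] at h2
  rw [h2, h1]
  field_simp


include hsum hpos in
lemma lam_mono (A C : Mat d) (hA : A.PosSemidef) (hC : C.PosSemidef)
    (h : ((1 : Mat d) - (A + C)).PosSemidef) : Λ A ≤ Λ (A + C) := by
  rw [lam_add Λ hsum A C hA hC h]
  have h1C : ((1 : Mat d) - C).PosSemidef := by
    have : (1 : Mat d) - C = ((1 : Mat d) - (A + C)) + A := by abel
    rw [this]; exact h.add hA
  linarith [hpos C hC h1C]

include hsum in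
lemma lam_ratQ (r : ℚ) (h0 : 0 ≤ r) (h1 : r ≤ 1) (M : Mat d) (hM : Eff M) :
    Λ ((r : ℝ) • M) = (r : ℝ) * Λ M := by
  have hnum : ((r.num.toNat : ℕ) : ℝ) = (r.num : ℝ) := by
    exact_mod_cast congrArg (Int.cast : ℤ → ℝ) (Int.toNat_of_nonneg (Rat.num_nonneg.mpr h0))
  have hcast : (r : ℝ) = (r.num.toNat : ℝ) / (r.den : ℝ) := by
    rw [Rat.cast_def, hnum]
  have hle : r.num.toNat ≤ r.den := by
    have hr1 : (r : ℝ) ≤ 1 := by exact_mod_cast h1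
    rw [Rat.cast_def, div_le_one (by positivity)] at hr1
    have : r.num ≤ (r.den : ℤ) := by exact_mod_cast hr1
    omega
  rw [hcast]
  exact lam_ratnat Λ hsum _ _ r.pos hle M hM


include hsum hpos in
lemma lam_homog (t : ℝ) (ht0 : 0 ≤ t) (ht1 : t ≤ 1) (M : Mat d) (hM : Eff M) :
    Λ (t • M) = t * Λ M := by
  have hMnn : 0 ≤ Λ M := hpos M hM.1 hM.2
  have up : ∀ r : ℚ, t ≤ (r : ℝ) → (r : ℝ) ≤ 1 → Λ (t • M) ≤ (r : ℝ) * Λ M := by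
    intro r hr hr1
    have h0r : (0 : ℝ) ≤ (r : ℝ) := le_trans ht0 hr
    have hsplit : t • M + ((r : ℝ) - t) • M = (r : ℝ) • M := by
      rw [← add_smul]; ring_nf
    have hmono := lam_mono Λ hpos hsum (t • M) (((r : ℝ) - t) • M)
      (psd_smul ht0 hM.1) (psd_smul (by linarith) hM.1)
      (by rw [hsplit]; exact (eff_smul h0r hr1 hM).2)
    rw [hsplit, lam_ratQ Λ hsum r (by exact_mod_cast h0r) (by exact_mod_cast hr1) M hM] at hmono
    exact hmono
  have low : ∀ r : ℚ, (0 : ℝ) ≤ (r : ℝ) → (r : ℝ) ≤ t → (r : ℝ) * Λ M ≤ Λ (t • M) := by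
    intro r h0r hrt
    have hsplit : (r : ℝ) • M + (t - (r : ℝ)) • M = t • M := by
      rw [← add_smul]; ring_nf
    have hmono := lam_mono Λ hpos hsum ((r : ℝ) • M) ((t - (r : ℝ)) • M)
      (psd_smul h0r hM.1) (psd_smul (by linarith) hM.1)
      (by rw [hsplit]; exact (eff_smul ht0 ht1 hM).2)
    rw [hsplit, lam_ratQ Λ hsum r (by exact_mod_cast h0r)
      (by exact_mod_cast le_trans hrt ht1) M hM] at hmono
    exact hmono
  refine le_antisymm ?_ ?_
  · refine le_of_forall_pos_le_add (fun ε hε => ?_)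
    by_cases h1 : t = 1
    · have := up 1 (by rw [h1]; norm_num) (by norm_num)
      rw [h1] at this ⊢; push_cast at this; linarith
    · have ht1' : t < 1 := lt_of_le_of_ne ht1 h1
      set δ : ℝ := ε / (Λ M + 1) with hδ
      have hδpos : 0 < δ := by positivity
      have hδe : δ * (Λ M + 1) = ε := by
        rw [hδ]; field_simp
      obtain ⟨r, hr1, hr2⟩ := exists_rat_btwn (show t < min 1 (t + δ) from
        lt_min ht1' (by linarith))
      have h1' : (r : ℝ) ≤ 1 := le_of_lt (lt_of_lt_of_le hr2 (min_le_left _ _))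
      have h2' : (r : ℝ) ≤ t + δ := le_of_lt (lt_of_lt_of_le hr2 (min_le_right _ _))
      have := up r (le_of_lt hr1) h1'
      have hmul : (r : ℝ) * Λ M ≤ (t + δ) * Λ M :=
        mul_le_mul_of_nonneg_right h2' hMnn
      nlinarith
  · refine le_of_forall_pos_le_add (fun ε hε => ?_)
    by_cases h0 : t = 0
    · rw [h0, zero_smul, lam_zero Λ hsum, zero_mul]; linarith
    · have ht0' : 0 < t := lt_of_le_of_ne ht0 (Ne.symm h0)
      set δ : ℝ := ε / (Λ M + 1) with hδ
      have hδpos : 0 < δ := by positivity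
      have hδe : δ * (Λ M + 1) = ε := by
        rw [hδ]; field_simp
      obtain ⟨r, hr1, hr2⟩ := exists_rat_btwn (show max 0 (t - δ) < t from
        max_lt ht0' (by linarith))
      have h0' : (0 : ℝ) ≤ (r : ℝ) := le_of_lt (lt_of_le_of_lt (le_max_left _ _) hr1)
      have h2' : t - δ ≤ (r : ℝ) := le_of_lt (lt_of_le_of_lt (le_max_right _ _) hr1)
      have := low r h0' (le_of_lt hr2)
      have hmul : (t - δ) * Λ M ≤ (r : ℝ) * Λ M :=
        mul_le_mul_of_nonneg_right h2' hMnn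
      nlinarith


noncomputable def Fl (Λ : Matrix (Fin d) (Fin d) ℂ → ℝ) (A : Mat d) : ℝ :=
  if h : ∃ c : ℝ, 0 < c ∧ (c • (1 : Mat d) - A).PosSemidef
  then h.choose * Λ (h.choose⁻¹ • A) else 0

include hsum hpos in
lemma two_c_dir (A : Mat d) (hA : A.PosSemidef) {c c' : ℝ} (hc : 0 < c) (hc' : 0 < c')
    (hcc : c ≤ c') (h : (c • (1 : Mat d) - A).PosSemidef) :
    c * Λ (c⁻¹ • A) = c' * Λ (c'⁻¹ • A) := by
  set M : Mat d := c⁻¹ • A with hMdef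
  have hMeff : Eff M := by
    refine ⟨psd_smul (by positivity) hA, ?_⟩
    have : (1 : Mat d) - M = c⁻¹ • (c • (1 : Mat d) - A) := by
      rw [smul_sub, smul_smul, inv_mul_cancel₀ hc.ne', one_smul]
    rw [this]
    exact psd_smul (by positivity) h
  have hsm : c'⁻¹ • A = (c / c') • M := by
    rw [hMdef, smul_smul]; congr 1; field_simp
  rw [hsm, lam_homog Λ hpos hsum (c / c') (by positivity) (by
    rw [div_le_one hc']; exact hcc) M hMeff]
  field_simp

include hsum hpos in
lemma two_c (A : Mat d) (hA : A.PosSemidef) {c c' : ℝ} (hc : 0 < c) (hc' : 0 < c')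
    (h : (c • (1 : Mat d) - A).PosSemidef) (h' : (c' • (1 : Mat d) - A).PosSemidef) :
    c * Λ (c⁻¹ • A) = c' * Λ (c'⁻¹ • A) := by
  rcases le_total c c' with hle | hle
  · exact two_c_dir Λ hpos hsum A hA hc hc' hle h
  · exact (two_c_dir Λ hpos hsum A hA hc' hc hle h').symm

include hsum hpos in
lemma Fl_spec (A : Mat d) (hA : A.PosSemidef) {c : ℝ} (hc : 0 < c)
    (h : (c • (1 : Mat d) - A).PosSemidef) : Fl Λ A = c * Λ (c⁻¹ • A) := by
  have hex : ∃ c : ℝ, 0 < c ∧ (c • (1 : Mat d) - A).PosSemidef := ⟨c, hc, h⟩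
  rw [Fl, dif_pos hex]
  exact two_c Λ hpos hsum A hA hex.choose_spec.1 hc hex.choose_spec.2 h

include hsum hpos in
lemma Fl_eff (M : Mat d) (hM : Eff M) : Fl Λ M = Λ M := by
  have := Fl_spec Λ hpos hsum M hM.1 one_pos (by rw [one_smul]; exact hM.2)
  rw [this, inv_one, one_smul, one_mul]

include hsum hpos in
lemma Fl_zero : Fl Λ (0 : Mat d) = 0 := by
  rw [Fl_eff Λ hpos hsum 0 ⟨Matrix.PosSemidef.zero, by simpa using Matrix.PosSemidef.one⟩]
  exact lam_zero Λ hsum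

include hsum hpos in
lemma Fl_add (A B : Mat d) (hA : A.PosSemidef) (hB : B.PosSemidef) :
    Fl Λ (A + B) = Fl Λ A + Fl Λ B := by
  obtain ⟨a, ha, hA'⟩ := exists_bound hA.1
  obtain ⟨b, hb, hB'⟩ := exists_bound hB.1
  set c : ℝ := a + b with hc
  have hcpos : 0 < c := by positivity
  have hA'' : (c • (1 : Mat d) - A).PosSemidef := by
    have : c • (1 : Mat d) - A = (a • (1 : Mat d) - A) + b • (1 : Mat d) := by
      rw [hc, add_smul]; abel
    rw [this]; exact hA'.add (psd_smul hb.le Matrix.PosSemidef.one)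
  have hB'' : (c • (1 : Mat d) - B).PosSemidef := by
    have : c • (1 : Mat d) - B = (b • (1 : Mat d) - B) + a • (1 : Mat d) := by
      rw [hc, add_smul]; abel
    rw [this]; exact hB'.add (psd_smul ha.le Matrix.PosSemidef.one)
  have hAB : (c • (1 : Mat d) - (A + B)).PosSemidef := by
    have : c • (1 : Mat d) - (A + B) = (a • (1 : Mat d) - A) + (b • (1 : Mat d) - B) := by
      rw [hc, add_smul]; abel
    rw [this]; exact hA'.add hB'
  rw [Fl_spec Λ hpos hsum (A + B) (hA.add hB) hcpos hAB,
    Fl_spec Λ hpos hsum A hA hcpos hA'', Fl_spec Λ hpos hsum B hB hcpos hB'']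
  have hsplit : c⁻¹ • (A + B) = c⁻¹ • A + c⁻¹ • B := smul_add _ _ _
  rw [hsplit, lam_add Λ hsum _ _ (psd_smul (by positivity) hA) (psd_smul (by positivity) hB) ?_]
  · ring
  · have : (1 : Mat d) - (c⁻¹ • A + c⁻¹ • B) = c⁻¹ • (c • (1 : Mat d) - (A + B)) := by
      rw [smul_sub, smul_smul, inv_mul_cancel₀ hcpos.ne', one_smul, smul_add]
    rw [this]
    exact psd_smul (by positivity) hAB

include hsum hpos in
lemma Fl_smul (t : ℝ) (ht : 0 ≤ t) (A : Mat d) (hA : A.PosSemidef) :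
    Fl Λ (t • A) = t * Fl Λ A := by
  rcases eq_or_lt_of_le ht with rfl | htpos
  · rw [zero_smul, Fl_zero Λ hpos hsum, zero_mul]
  · obtain ⟨c, hc, hA'⟩ := exists_bound hA.1
    have hA'' : ((t * c) • (1 : Mat d) - t • A).PosSemidef := by
      have : (t * c) • (1 : Mat d) - t • A = t • (c • (1 : Mat d) - A) := by
        rw [smul_sub, smul_smul]
      rw [this]; exact psd_smul ht hA'
    rw [Fl_spec Λ hpos hsum (t • A) (psd_smul ht hA) (by positivity) hA'',
      Fl_spec Λ hpos hsum A hA hc hA']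
    have : (t * c)⁻¹ • (t • A) = c⁻¹ • A := by
      rw [smul_smul]; congr 1; field_simp
    rw [this]
    ring


lemma exists_shift {A : Mat d} (hA : A.IsHermitian) :
    ∃ t : ℝ, 0 < t ∧ (A + t • (1 : Mat d)).PosSemidef := by
  obtain ⟨c, hc, h⟩ := exists_bound (show (-A).IsHermitian by
    unfold Matrix.IsHermitian
    rw [Matrix.conjTranspose_neg, hA.eq])
  refine ⟨c, hc, ?_⟩
  have : A + c • (1 : Mat d) = c • (1 : Mat d) - (-A) := by abel
  rw [this]; exact h

noncomputable def Gl (Λ : Matrix (Fin d) (Fin d) ℂ → ℝ) (A : Mat d) : ℝ :=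
  if h : ∃ t : ℝ, 0 < t ∧ (A + t • (1 : Mat d)).PosSemidef
  then Fl Λ (A + h.choose • 1) - h.choose * Fl Λ 1 else 0

include hsum hpos in
lemma two_t_dir (A : Mat d) {t t' : ℝ} (ht : 0 < t) (ht' : 0 < t') (htt : t ≤ t')
    (h : (A + t • (1 : Mat d)).PosSemidef) :
    Fl Λ (A + t • 1) - t * Fl Λ 1 = Fl Λ (A + t' • 1) - t' * Fl Λ 1 := by
  have hsplit : A + t' • (1 : Mat d) = (A + t • 1) + (t' - t) • (1 : Mat d) := by
    rw [sub_smul]; abel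
  rw [hsplit, Fl_add Λ hpos hsum _ _ h (psd_smul (by linarith) Matrix.PosSemidef.one),
    Fl_smul Λ hpos hsum (t' - t) (by linarith) 1 Matrix.PosSemidef.one]
  ring

include hsum hpos in
lemma Gl_spec (A : Mat d) {t : ℝ} (ht : 0 < t) (h : (A + t • (1 : Mat d)).PosSemidef) :
    Gl Λ A = Fl Λ (A + t • 1) - t * Fl Λ 1 := by
  have hex : ∃ t : ℝ, 0 < t ∧ (A + t • (1 : Mat d)).PosSemidef := ⟨t, ht, h⟩
  rw [Gl, dif_pos hex]
  rcases le_total hex.choose t with hle | hle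
  · exact two_t_dir Λ hpos hsum A hex.choose_spec.1 ht hle hex.choose_spec.2
  · exact (two_t_dir Λ hpos hsum A ht hex.choose_spec.1 hle h).symm

include hsum hpos in
lemma Gl_psd (A : Mat d) (hA : A.PosSemidef) : Gl Λ A = Fl Λ A := by
  rw [Gl_spec Λ hpos hsum A one_pos (by
    exact hA.add (psd_smul zero_le_one Matrix.PosSemidef.one)),
    Fl_add Λ hpos hsum A (1 • 1) hA (psd_smul zero_le_one Matrix.PosSemidef.one),
    Fl_smul Λ hpos hsum 1 zero_le_one 1 Matrix.PosSemidef.one]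
  ring

include hsum hpos in
lemma Gl_add (A B : Mat d) (hA : A.IsHermitian) (hB : B.IsHermitian) :
    Gl Λ (A + B) = Gl Λ A + Gl Λ B := by
  obtain ⟨a, ha, hA'⟩ := exists_shift hA
  obtain ⟨b, hb, hB'⟩ := exists_shift hB
  have hAB : (A + B + (a + b) • (1 : Mat d)).PosSemidef := by
    have : A + B + (a + b) • (1 : Mat d) = (A + a • 1) + (B + b • 1) := by
      rw [add_smul]; abel
    rw [this]; exact hA'.add hB'
  rw [Gl_spec Λ hpos hsum (A + B) (by positivity) hAB,
    Gl_spec Λ hpos hsum A ha hA', Gl_spec Λ hpos hsum B hb hB']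
  have hsplit : A + B + (a + b) • (1 : Mat d) = (A + a • 1) + (B + b • 1) := by
    rw [add_smul]; abel
  rw [hsplit, Fl_add Λ hpos hsum _ _ hA' hB']
  ring

include hsum hpos in
lemma Gl_zero : Gl Λ (0 : Mat d) = 0 := by
  rw [Gl_psd Λ hpos hsum 0 Matrix.PosSemidef.zero, Fl_zero Λ hpos hsum]

include hsum hpos in
lemma Gl_neg (A : Mat d) (hA : A.IsHermitian) : Gl Λ (-A) = - Gl Λ A := by
  have hnegA : (-A).IsHermitian := by
    unfold Matrix.IsHermitian
    rw [Matrix.conjTranspose_neg, hA.eq]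
  have := Gl_add Λ hpos hsum A (-A) hA hnegA
  rw [add_neg_cancel, Gl_zero Λ hpos hsum] at this
  linarith

include hsum hpos in
lemma Gl_smul (r : ℝ) (A : Mat d) (hA : A.IsHermitian) : Gl Λ (r • A) = r * Gl Λ A := by
  have hsmul_herm : ∀ (s : ℝ) (B : Mat d), B.IsHermitian → (s • B).IsHermitian := by
    intro s B hB
    unfold Matrix.IsHermitian
    rw [Matrix.conjTranspose_smul, hB.eq, star_trivial]
  have key : ∀ (s : ℝ), 0 < s → ∀ (B : Mat d), B.IsHermitian → Gl Λ (s • B) = s * Gl Λ B := by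
    intro s hs B hB
    obtain ⟨t, ht, hB'⟩ := exists_shift hB
    have hsB : (s • B + (s * t) • (1 : Mat d)).PosSemidef := by
      have : s • B + (s * t) • (1 : Mat d) = s • (B + t • 1) := by
        rw [smul_add, smul_smul]
      rw [this]; exact psd_smul hs.le hB'
    rw [Gl_spec Λ hpos hsum (s • B) (by positivity) hsB,
      Gl_spec Λ hpos hsum B ht hB']
    have : s • B + (s * t) • (1 : Mat d) = s • (B + t • 1) := by
      rw [smul_add, smul_smul]
    rw [this, Fl_smul Λ hpos hsum s hs.le _ hB']
    ring
  rcases lt_trichotomy r 0 with hr | rfl | hr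
  · have hnegA : (-A).IsHermitian := by
      unfold Matrix.IsHermitian
      rw [Matrix.conjTranspose_neg, hA.eq]
    have : r • A = (-r) • (-A) := by rw [smul_neg, neg_smul, neg_neg]
    rw [this, key (-r) (by linarith) (-A) hnegA, Gl_neg Λ hpos hsum A hA]
    ring
  · rw [zero_smul, Gl_zero Λ hpos hsum, zero_mul]
  · exact key r hr A hA

end Gaux


end GleasonAux

/-- A frame function on effects: `Λ` is nonnegative on effects (`0 ≤ M ≤ 1`)
and sums to `1` on every finite measurement (family of positive operators
summing to the identity).  Then `Λ` is additive on effects and extends uniquely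
to an `ℝ`-linear functional on the Hermitian (self-adjoint) operators. -/
theorem gleason_frame_function_linear (d : ℕ)
    (Λ : Matrix (Fin d) (Fin d) ℂ → ℝ)
    (hpos : ∀ M : Matrix (Fin d) (Fin d) ℂ,
      M.PosSemidef → (1 - M).PosSemidef → 0 ≤ Λ M)
    (hsum : ∀ (k : ℕ) (M : Fin k → Matrix (Fin d) (Fin d) ℂ),
      (∀ i, (M i).PosSemidef) → ∑ i, M i = 1 → ∑ i, Λ (M i) = 1) :
    (∀ M₁ M₂ : Matrix (Fin d) (Fin d) ℂ, M₁.PosSemidef → M₂.PosSemidef →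
      (1 - (M₁ + M₂)).PosSemidef → Λ (M₁ + M₂) = Λ M₁ + Λ M₂) ∧
    ∃! L : selfAdjoint (Matrix (Fin d) (Fin d) ℂ) →ₗ[ℝ] ℝ,
      ∀ (M : Matrix (Fin d) (Fin d) ℂ) (hM : M.PosSemidef)
        (hM' : (1 - M).PosSemidef) (hsa : IsSelfAdjoint M),
        L ⟨M, hsa⟩ = Λ M := by
  constructor
  · exact fun M₁ M₂ h1 h2 h12 => Gaux.lam_add Λ hsum M₁ M₂ h1 h2 h12
  · refine ⟨{ toFun := fun A => Gaux.Gl Λ (A : Gaux.Mat d)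
              map_add' := fun A B => ?_
              map_smul' := fun r A => ?_ }, ?_, ?_⟩
    · show Gaux.Gl Λ (((A + B : selfAdjoint (Gaux.Mat d))) : Gaux.Mat d) = _
      rw [AddSubgroup.coe_add]
      exact Gaux.Gl_add Λ hpos hsum _ _ A.2 B.2
    · show Gaux.Gl Λ (((r • A : selfAdjoint (Gaux.Mat d))) : Gaux.Mat d) = _
      rw [selfAdjoint.val_smul]
      rw [Gaux.Gl_smul Λ hpos hsum r _ A.2]
      simp
    · intro M hM hM' hsa
      show Gaux.Gl Λ M = Λ M
      rw [Gaux.Gl_psd Λ hpos hsum M hM, Gaux.Fl_eff Λ hpos hsum M ⟨hM, hM'⟩]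
    · intro L' hL'
      have hLpsd : ∀ (B : Gaux.Mat d) (hB : B.PosSemidef),
          L' ⟨B, hB.1⟩ = Gaux.Fl Λ B := by
        intro B hB
        obtain ⟨c, hc, hB'⟩ := Gaux.exists_bound hB.1
        have heff : Gaux.Eff (c⁻¹ • B) := by
          constructor
          · exact Gaux.psd_smul (by positivity) hB
          · have : (1 : Gaux.Mat d) - c⁻¹ • B = c⁻¹ • (c • 1 - B) := by
              rw [smul_sub, smul_smul, inv_mul_cancel₀ hc.ne', one_smul]
            rw [this]; exact Gaux.psd_smul (by positivity) hB'
        have hsa' : IsSelfAdjoint (c⁻¹ • B) := heff.1.1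
        have hsub : (⟨B, hB.1⟩ : selfAdjoint (Gaux.Mat d))
            = c • (⟨c⁻¹ • B, hsa'⟩ : selfAdjoint (Gaux.Mat d)) := by
          apply Subtype.ext
          rw [selfAdjoint.val_smul, smul_smul, mul_inv_cancel₀ hc.ne', one_smul]
        rw [hsub, _root_.map_smul, hL' _ heff.1 heff.2 hsa', smul_eq_mul,
          Gaux.Fl_spec Λ hpos hsum B hB hc hB']
      refine LinearMap.ext fun x => ?_
      obtain ⟨A, hA⟩ := x
      obtain ⟨t, ht, hA'⟩ := Gaux.exists_shift hA
      have h1sa : IsSelfAdjoint (1 : Gaux.Mat d) := Matrix.isHermitian_one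
      have hdecomp : (⟨A, hA⟩ : selfAdjoint (Gaux.Mat d))
          = (⟨A + t • 1, hA'.1⟩ : selfAdjoint (Gaux.Mat d))
            - t • (⟨1, h1sa⟩ : selfAdjoint (Gaux.Mat d)) := by
        apply Subtype.ext
        rw [AddSubgroup.coe_sub, selfAdjoint.val_smul]
        show A = (A + t • 1) - t • (1 : Gaux.Mat d)
        abel
      have e1 : L' ⟨A, hA⟩ = Gaux.Fl Λ (A + t • 1) - t * Gaux.Fl Λ 1 := by
        rw [hdecomp, map_sub, _root_.map_smul, smul_eq_mul,
          hLpsd (A + t • 1) hA', hLpsd 1 Matrix.PosSemidef.one]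
      rw [e1]
      show _ = Gaux.Gl Λ A
      rw [Gaux.Gl_spec Λ hpos hsum A ht hA']
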